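/- Let S be a string of length n, let k ≥ 1 and m ≥ 2, and let x be an integer with 1 ≤ x ≤ n/2. Define I = { i : 1 ≤ i ≤ x/(2(mk+1)) and HAM(S[1,x], S[i+1,i+x]) ≤ k }. Then for any p₁, …, p_m ∈ I, their greatest common divisor d = gcd(p₁, …, p_m) satisfies HAM(S[1,x], S[d+1,d+x]) ≤ 8mk² + 1. -/

import Mathlib

private lemma per_sub {α : Type*} (S : ℕ → α) (u N s t : ℕ) (hst : s ≤ t)
    (hsum : u + s + t ≤ N + 1)
    (hs : ∀ z, u ≤ z → z + s ≤ N → S z = S (z + s))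
    (ht : ∀ z, u ≤ z → z + t ≤ N → S z = S (z + t)) :
    ∀ z, u ≤ z → z + (t - s) ≤ N → S z = S (z + (t - s)) := by
  intro z hz hzN
  by_cases h : u + s ≤ z
  · have A := hs (z - s) (by omega) (by omega)
    have B := ht (z - s) (by omega) (by omega)
    have e2 : z - s + s = z := by omega
    have e1 : z - s + t = z + (t - s) := by omega
    rw [e2] at A
    rw [e1] at B
    exact A.symm.trans B
  · have A := ht z hz (by omega)
    have B := hs (z + (t - s)) (by omega) (by omega)
    have e : z + (t - s) + s = z + t := by omega
    rw [e] at B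
    exact A.trans B.symm

private lemma per_mod {α : Type*} (S : ℕ → α) (u N P : ℕ) (hUN : u + 2 * P ≤ N + 1) :
    ∀ t s, 1 ≤ s → s ≤ P → t ≤ P →
    (∀ z, u ≤ z → z + s ≤ N → S z = S (z + s)) →
    (∀ z, u ≤ z → z + t ≤ N → S z = S (z + t)) →
    (∀ z, u ≤ z → z + t % s ≤ N → S z = S (z + t % s)) := by
  intro t
  induction t using Nat.strong_induction_on with
  | _ t ih =>
    intro s hs1 hsP htP hps hpt
    by_cases h : t < s
    · rw [Nat.mod_eq_of_lt h]; exact hpt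
    · push_neg at h
      rw [Nat.mod_eq_sub_mod h]
      exact ih (t - s) (by omega) s hs1 hsP (by omega) hps
        (per_sub S u N s t h (by omega) hps hpt)

private lemma per_gcd {α : Type*} (S : ℕ → α) (u N P : ℕ) (hUN : u + 2 * P ≤ N + 1) :
    ∀ s t, s ≤ P → t ≤ P →
    (∀ z, u ≤ z → z + s ≤ N → S z = S (z + s)) →
    (∀ z, u ≤ z → z + t ≤ N → S z = S (z + t)) →
    (∀ z, u ≤ z → z + Nat.gcd s t ≤ N → S z = S (z + Nat.gcd s t)) := by
  intro s
  induction s using Nat.strong_induction_on with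
  | _ s ih =>
    intro t hsP htP hps hpt
    rcases Nat.eq_zero_or_pos s with h0 | hpos
    · subst h0; rw [Nat.gcd_zero_left]; exact hpt
    · rw [Nat.gcd_rec]
      exact ih (t % s) (Nat.mod_lt _ hpos) s (by have := Nat.mod_lt t hpos; omega) hsP
        (per_mod S u N P hUN t s hpos hsP htP hps hpt) hps

private lemma nat_gcd_le {s t P : ℕ} (hs : s ≤ P) (ht : t ≤ P) : Nat.gcd s t ≤ P := by
  rcases Nat.eq_zero_or_pos s with h0 | hpos
  · subst h0; rw [Nat.gcd_zero_left]; exact ht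
  · exact (Nat.gcd_le_left t hpos).trans hs

private lemma per_fold {α : Type*} {ι : Type*} [DecidableEq ι] (S : ℕ → α) (u N P : ℕ)
    (hUN : u + 2 * P ≤ N + 1) (p : ι → ℕ) :
    ∀ F : Finset ι,
      (∀ i ∈ F, p i ≤ P ∧ ∀ z, u ≤ z → z + p i ≤ N → S z = S (z + p i)) →
      (F.gcd p ≤ P ∧ ∀ z, u ≤ z → z + F.gcd p ≤ N → S z = S (z + F.gcd p)) := by
  intro F
  induction F using Finset.induction_on with
  | empty => exact fun _ => ⟨by simp, fun z _ _ => by simp⟩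
  | insert i F' hni ih =>
    intro h
    have hi := h i (Finset.mem_insert_self i F')
    have hF := ih fun j hj => h j (Finset.mem_insert_of_mem hj)
    rw [Finset.gcd_insert]
    have hgcd : gcd (p i) (F'.gcd p) = Nat.gcd (p i) (F'.gcd p) := rfl
    rw [hgcd]
    exact ⟨nat_gcd_le hi.1 hF.1, per_gcd S u N P hUN _ _ hi.1 hF.1 hi.2 hF.2⟩

private lemma filter_mod_card_le_two (P l b r : ℕ) (hP : 1 ≤ P) (hb : b < l + 2 * P) :
    ((Finset.Icc l b).filter (fun z => z % P = r)).card ≤ 2 := by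
  set F := (Finset.Icc l b).filter (fun z => z % P = r) with hF
  rcases F.eq_empty_or_nonempty with h | h
  · simp [h]
  · set z0 := F.min' h with hz0
    have hz0m := Finset.mem_filter.mp (F.min'_mem h)
    have hz0I := Finset.mem_Icc.mp hz0m.1
    have hsub : F ⊆ {z0, z0 + P} := by
      intro z hzF
      have hle : z0 ≤ z := F.min'_le z hzF
      have hzm := Finset.mem_filter.mp hzF
      have hzI := Finset.mem_Icc.mp hzm.1
      have hmod : z0 % P = z % P := hz0m.2.trans hzm.2.symm
      obtain ⟨c, hc⟩ := (Nat.modEq_iff_dvd' hle).mp hmod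
      have hlt : z - z0 < 2 * P := by omega
      have hc2 : c < 2 := by
        by_contra hcon
        push_neg at hcon
        have : P * 2 ≤ P * c := Nat.mul_le_mul_left P hcon
        omega
      simp only [Finset.mem_insert, Finset.mem_singleton]
      interval_cases c <;> omega
    calc F.card ≤ ({z0, z0 + P} : Finset ℕ).card := Finset.card_le_card hsub
      _ ≤ 2 := by
          apply (Finset.card_insert_le _ _).trans
          simp

/-- `hamShift S x i` = HAM(S[1,x], S[i+1,i+x]) = |{z : 1 ≤ z ≤ x, S[z] ≠ S[z+i]}|. -/
def hamShift {α : Type*} [DecidableEq α] (S : ℕ → α) (x i : ℕ) : ℕ :=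
  ((Finset.Icc 1 x).filter fun z => S z ≠ S (z + i)).card

theorem stmt_3 {α : Type*} [DecidableEq α] (n k m x : ℕ) (S : ℕ → α)
    (hk : 1 ≤ k) (hm : 2 ≤ m) (hx1 : 1 ≤ x) (hx2 : x ≤ n / 2)
    (p : Fin m → ℕ)
    (hp1 : ∀ i, 1 ≤ p i)
    (hp2 : ∀ i, p i ≤ x / (2 * (m * k + 1)))
    (hp3 : ∀ i, hamShift S x (p i) ≤ k)
    (d : ℕ) (hd : d = Finset.univ.gcd p) :
    hamShift S x d ≤ 8 * m * k ^ 2 + 1 := by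
  classical
  -- the maximal period
  obtain ⟨i0, hi0⟩ : ∃ i0, ∀ i, p i ≤ p i0 := by
    obtain ⟨b, _, hb⟩ := Finset.exists_max_image (Finset.univ : Finset (Fin m)) p
      ⟨⟨0, by omega⟩, Finset.mem_univ _⟩
    exact ⟨b, fun i => hb i (Finset.mem_univ i)⟩
  set P := p i0 with hPdef
  have hP1 : 1 ≤ P := hp1 i0
  have hPx : 2 * (m * k + 1) * P ≤ x := by
    have h1 := (Nat.le_div_iff_mul_le (by positivity)).mp (hp2 i0)
    calc 2 * (m * k + 1) * P = P * (2 * (m * k + 1)) := by ring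
      _ ≤ x := h1
  have hdvd : ∀ i, d ∣ p i := fun i => hd ▸ Finset.gcd_dvd (Finset.mem_univ i)
  have hd1 : 1 ≤ d := by
    rcases Nat.eq_zero_or_pos d with h0 | h; swap
    · exact h
    · exfalso
      have := Finset.gcd_eq_zero_iff.mp (hd ▸ h0) i0 (Finset.mem_univ i0)
      have := hp1 i0
      omega
  have hdP : d ≤ P := Nat.le_of_dvd hP1 (hdvd i0)
  -- the mismatch sets
  set B : Fin m → Finset ℕ := fun i => (Finset.Icc 1 x).filter fun z => S z ≠ S (z + p i)
    with hBdef
  have hBcard : ∀ i, (B i).card ≤ k := fun i => hp3 i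
  have hBmem : ∀ i z, 1 ≤ z → z ≤ x → z ∉ B i → S z = S (z + p i) := by
    intro i z h1 h2 hzB
    by_contra hne
    exact hzB (Finset.mem_filter.mpr ⟨Finset.mem_Icc.mpr ⟨h1, h2⟩, hne⟩)
  set M := Finset.univ.biUnion B with hMdef
  have hMcard : M.card ≤ m * k := by
    calc M.card ≤ ∑ i : Fin m, (B i).card := Finset.card_biUnion_le
      _ ≤ ∑ _i : Fin m, k := Finset.sum_le_sum fun i _ => hBcard i
      _ = m * k := by simp [Finset.sum_const, Finset.card_univ, mul_comm]
  -- clean window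
  obtain ⟨a, ha1, hax, hclean⟩ : ∃ a, 1 ≤ a ∧ a + 2 * P ≤ x + 1 ∧
      ∀ z, a ≤ z → z < a + 2 * P → z ∉ M := by
    by_contra hcon
    push_neg at hcon
    have hsub : Finset.range (m * k + 1) ⊆ M.image (fun b => (b - 1) / (2 * P)) := by
      intro j hj
      have hjq := Finset.mem_range.mp hj
      obtain ⟨z, hz1, hz2, hzM⟩ := hcon (2 * P * j + 1) (by omega)
        (by
          have h1 : 2 * P * (j + 1) ≤ 2 * P * (m * k + 1) := by
            apply Nat.mul_le_mul_left; omega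
          nlinarith)
      refine Finset.mem_image.mpr ⟨z, hzM, ?_⟩
      apply Nat.div_eq_of_lt_le
      · calc j * (2 * P) = 2 * P * j := by ring
          _ ≤ z - 1 := by omega
      · calc z - 1 < 2 * P * j + 2 * P := by omega
          _ = (j + 1) * (2 * P) := by ring
    have h1 : m * k + 1 ≤ M.card := by
      calc m * k + 1 = (Finset.range (m * k + 1)).card := by simp
        _ ≤ (M.image (fun b => (b - 1) / (2 * P))).card := Finset.card_le_card hsub
        _ ≤ M.card := Finset.card_image_le
    omega
  -- periodicity with d on intervals
  have perInt : ∀ u, 1 ≤ u → u + 2 * P ≤ x + 1 → (∀ z, u ≤ z → z < u + 2 * P → z ∉ M) →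
      ∀ z, u ≤ z → z + d ≤ u + 2 * P → S z = S (z + d) := by
    intro u hu1 hux hcl
    have := (per_fold S u (u + 2 * P) P (by omega) p Finset.univ
      (fun i _ => ⟨hi0 i, by
        intro z hz hz2
        have hpi := hp1 i
        have hzM : z ∉ M := hcl z hz (by omega)
        have hzB : z ∉ B i := fun hzB => hzM (Finset.mem_biUnion.mpr ⟨i, Finset.mem_univ i, hzB⟩)
        exact hBmem i z (by omega) (by omega) hzB⟩)).2
    rw [← hd] at this
    exact this
  have perW : ∀ z, a ≤ z → z + d ≤ a + 2 * P → S z = S (z + d) :=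
    perInt a ha1 hax hclean
  -- every mismatch position is near M or near the end
  have nearM : ∀ z, 1 ≤ z → z ≤ x → S z ≠ S (z + d) →
      ∃ b, (b ∈ M ∨ b = x) ∧ z ≤ b ∧ b ≤ z + 2 * P - 1 := by
    intro z h1 h2 hne
    by_contra hcon
    push_neg at hcon
    have hxfar : z + 2 * P ≤ x := by
      have := hcon x (Or.inr rfl) h2
      omega
    refine hne (perInt z h1 (by omega) ?_ z (le_refl z) (by omega))
    intro z' hz1 hz2 hz'M
    have := hcon z' (Or.inl hz'M) hz1
    omega
  -- the charge set
  set C := B i0 ∪ (B i0).image (fun b => b - d) with hCdef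
  have hCcard : C.card ≤ 2 * k := by
    calc C.card ≤ (B i0).card + ((B i0).image (fun b => b - d)).card := Finset.card_union_le _ _
      _ ≤ (B i0).card + (B i0).card := by
          have := Finset.card_image_le (s := B i0) (f := fun b => b - d)
          omega
      _ ≤ 2 * k := by have := hBcard i0; omega
  have hmemC1 : ∀ y, y ∈ B i0 → y ∈ C := fun y hy => Finset.mem_union_left _ hy
  have hmemC2 : ∀ y, y + d ∈ B i0 → y ∈ C := by
    intro y hy
    exact Finset.mem_union_right _ (Finset.mem_image.mpr ⟨y + d, hy, by omega⟩)
  -- window has no d-mismatch in its first half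
  have winF : ∀ w, a ≤ w → w < a + P → S w = S (w + d) :=
    fun w h1 h2 => perW w h1 (by omega)
  -- descending chain
  have down : ∀ z, a ≤ z → z ≤ x → S z ≠ S (z + d) → ∃ y ∈ C, y % P = z % P := by
    intro z
    induction z using Nat.strong_induction_on with
    | _ z ih =>
      intro haz hzx hne
      by_cases hzw : z < a + P
      · exact absurd (winF z haz hzw) hne
      · push_neg at hzw
        set y := z - P with hy
        have hzy : z = y + P := by omega
        by_cases hyB : y ∈ B i0
        · exact ⟨y, hmemC1 y hyB, by rw [hzy, Nat.add_mod_right]⟩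
        by_cases hydB : y + d ∈ B i0
        · exact ⟨y, hmemC2 y hydB, by rw [hzy, Nat.add_mod_right]⟩
        · have h1 : S y = S (y + P) := hBmem i0 y (by omega) (by omega) hyB
          have h2 : S (y + d) = S (y + d + P) := hBmem i0 (y + d) (by omega) (by omega) hydB
          have hne' : S y ≠ S (y + d) := by
            rw [h1, h2]
            have e1 : y + P = z := by omega
            have e2 : y + d + P = z + d := by omega
            rw [e1, e2]
            exact hne
          obtain ⟨y', hy'C, hy'm⟩ := ih y (by omega) (by omega) (by omega) hne'
          exact ⟨y', hy'C, by rw [hzy, Nat.add_mod_right, hy'm]⟩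
  -- ascending chain
  have up : ∀ t z, a = z + t → 1 ≤ z → S z ≠ S (z + d) → ∃ y ∈ C, y % P = z % P := by
    intro t
    induction t using Nat.strong_induction_on with
    | _ t ih =>
      intro z haz h1z hne
      by_cases ht0 : a ≤ z
      · exact absurd (winF z ht0 (by omega)) hne
      · push_neg at ht0
        by_cases hyB : z ∈ B i0
        · exact ⟨z, hmemC1 z hyB, rfl⟩
        by_cases hydB : z + d ∈ B i0
        · exact ⟨z, hmemC2 z hydB, rfl⟩
        · have h1 : S z = S (z + P) := hBmem i0 z h1z (by omega) hyB
          have h2 : S (z + d) = S (z + d + P) := hBmem i0 (z + d) (by omega) (by omega) hydB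
          have hne' : S (z + P) ≠ S (z + P + d) := by
            rw [← h1]
            have e2 : z + P + d = z + d + P := by omega
            rw [e2, ← h2]
            exact hne
          by_cases hw : a ≤ z + P
          · exact absurd (winF (z + P) hw (by omega)) hne'
          · push_neg at hw
            obtain ⟨y', hy'C, hy'm⟩ := ih (t - P) (by omega) (z + P) (by omega) (by omega) hne'
            exact ⟨y', hy'C, by rw [hy'm, Nat.add_mod_right]⟩
  have chain : ∀ z, 1 ≤ z → z ≤ x → S z ≠ S (z + d) → ∃ y ∈ C, y % P = z % P := by
    intro z h1 h2 hne
    by_cases h : a ≤ z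
    · exact down z h h2 hne
    · exact up (a - z) z (by omega) h1 hne
  -- final counting
  set N' := insert x M with hN'def
  have hN'card : N'.card ≤ m * k + 1 := by
    calc N'.card ≤ M.card + 1 := Finset.card_insert_le _ _
      _ ≤ m * k + 1 := by omega
  set D := (Finset.Icc 1 x).filter (fun z => S z ≠ S (z + d)) with hDdef
  have hDsub : D ⊆ (C ×ˢ N').biUnion
      (fun yb => (Finset.Icc (yb.2 + 1 - 2 * P) yb.2).filter (fun z => z % P = yb.1 % P)) := by
    intro z hz
    have hzm := Finset.mem_filter.mp hz
    have hzI := Finset.mem_Icc.mp hzm.1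
    obtain ⟨y, hyC, hym⟩ := chain z hzI.1 hzI.2 hzm.2
    obtain ⟨b, hbN, hzb, hbz⟩ := nearM z hzI.1 hzI.2 hzm.2
    refine Finset.mem_biUnion.mpr ⟨(y, b), Finset.mem_product.mpr ⟨hyC, ?_⟩, ?_⟩
    · rcases hbN with h | h
      · exact Finset.mem_insert_of_mem h
      · rw [h]; exact Finset.mem_insert_self _ _
    · exact Finset.mem_filter.mpr ⟨Finset.mem_Icc.mpr ⟨by omega, hzb⟩, hym.symm⟩
  have hDcard : D.card ≤ (2 * k) * (m * k + 1) * 2 := by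
    calc D.card ≤ ((C ×ˢ N').biUnion
        (fun yb => (Finset.Icc (yb.2 + 1 - 2 * P) yb.2).filter (fun z => z % P = yb.1 % P))).card :=
          Finset.card_le_card hDsub
      _ ≤ ∑ yb ∈ C ×ˢ N',
          ((Finset.Icc (yb.2 + 1 - 2 * P) yb.2).filter (fun z => z % P = yb.1 % P)).card :=
          Finset.card_biUnion_le
      _ ≤ (C ×ˢ N').card • 2 := Finset.sum_le_card_nsmul _ _ 2
          (fun yb _ => filter_mod_card_le_two P (yb.2 + 1 - 2 * P) yb.2 (yb.1 % P) hP1 (by omega))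
      _ = C.card * N'.card * 2 := by rw [smul_eq_mul, Finset.card_product, mul_comm]
      _ ≤ (2 * k) * (m * k + 1) * 2 := by
          have := Nat.mul_le_mul hCcard hN'card
          omega
  have hfinal : hamShift S x d = D.card := rfl
  rw [hfinal]
  nlinarith [hDcard, hk, hm]
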